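/- For integers k ≥ 2 and n ≥ 2k, let F be a family of stable k-subsets of {1,...,n}, and let A, B ∈ F be disjoint sets. Then the number of sets in F that intersect both A and B is at most k²·C(n-k-2, k-2). Consequently, d(A) + d(B) ≥ |F| − k²·C(n-k-2, k-2), where d(X) denotes the number of members of F disjoint from X. -/

import Mathlib

open Finset

attribute [local instance] Classical.propDecidable

/-- `A` is a stable subset of `{1,...,n}`: no two cyclically consecutive elements. -/
def Stable (n : ℕ) (A : Finset ℕ) : Prop :=
  (∀ i ∈ A, i + 1 ∉ A) ∧ ¬(1 ∈ A ∧ n ∈ A)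

/-- The collection of stable `k`-subsets of `{1,...,n}`. -/
noncomputable def stableSets (n k : ℕ) : Finset (Finset ℕ) :=
  ((Finset.Icc 1 n).powersetCard k).filter (fun A => Stable n A)

namespace Stmt8aux

lemma master_plain (W : Finset ℕ) (H : ℕ)
    (hadj : ∀ u ∈ W, u + 1 ∉ W) (hH : ∀ u ∈ W, u ≤ H) :
    2 * W.card ≤ H + 2 := by
  classical
  have hpd : ∀ u ∈ W, ∀ v ∈ W, u ≠ v →
      Disjoint ({u, u+1} : Finset ℕ) ({v, v+1} : Finset ℕ) := by
    intro u hu v hv huv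
    have h1 : u + 1 ≠ v := fun h => hadj u hu (h ▸ hv)
    have h2 : v + 1 ≠ u := fun h => hadj v hv (h ▸ hu)
    simp only [Finset.disjoint_left, Finset.mem_insert, Finset.mem_singleton]
    rintro x (rfl | rfl) hx <;> rcases hx with h | h <;> omega
  have hcard : (W.biUnion (fun u => ({u, u+1} : Finset ℕ))).card = 2 * W.card := by
    rw [Finset.card_biUnion hpd]
    have : ∀ u : ℕ, ({u, u+1} : Finset ℕ).card = 2 := by
      intro u
      rw [Finset.card_insert_of_notMem (by simp), Finset.card_singleton]
    simp [this, Finset.sum_const, mul_comm]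
  have hsub : (W.biUnion (fun u => ({u, u+1} : Finset ℕ))) ⊆ Finset.range (H + 2) := by
    intro x hx
    simp only [Finset.mem_biUnion, Finset.mem_insert, Finset.mem_singleton] at hx
    obtain ⟨u, hu, hux⟩ := hx
    have := hH u hu
    simp only [Finset.mem_range]
    omega
  have := Finset.card_le_card hsub
  rw [hcard, Finset.card_range] at this
  exact this

lemma master_cross (W : Finset ℕ) (H c : ℕ)
    (hadj : ∀ u ∈ W, u + 1 ∉ W) (hH : ∀ u ∈ W, u ≤ H)
    (hc : ∀ u ∈ W, u ≠ c ∧ u + 1 ≠ c ∧ u ≠ c + 1) (hcH : c ≤ H) :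
    2 * W.card + 2 ≤ H + 2 := by
  classical
  have hadj' : ∀ u ∈ insert c W, u + 1 ∉ insert c W := by
    intro u hu
    simp only [Finset.mem_insert] at hu ⊢
    rintro (h | h)
    · rcases hu with rfl | hu
      · omega
      · exact (hc u hu).2.1 h
    · rcases hu with rfl | hu
      · exact (hc _ h).2.2 rfl
      · exact hadj u hu h
  have hH' : ∀ u ∈ insert c W, u ≤ H := by
    intro u hu
    rcases Finset.mem_insert.mp hu with rfl | hu
    · exact hcH
    · exact hH u hu
  have := master_plain (insert c W) H hadj' hH'
  have hcW : c ∉ W := fun h => (hc c h).1 rfl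
  rw [Finset.card_insert_of_notMem hcW] at this
  omega

end Stmt8aux

namespace Stmt8aux

lemma shift_card (W : Finset ℕ) (x : ℕ) (hlo : ∀ u ∈ W, x ≤ u) :
    (W.image (· - x)).card = W.card := by
  apply Finset.card_image_of_injOn
  intro u hu v hv huv
  have := hlo u hu; have := hlo v hv
  simp only at huv; omega

lemma shift_adj (W : Finset ℕ) (x : ℕ) (hlo : ∀ u ∈ W, x ≤ u)
    (hadj : ∀ u ∈ W, u + 1 ∉ W) :
    ∀ u ∈ W.image (· - x), u + 1 ∉ W.image (· - x) := by
  intro u hu hu1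
  simp only [Finset.mem_image] at hu hu1
  obtain ⟨a, ha, rfl⟩ := hu
  obtain ⟨b, hb, hba⟩ := hu1
  have := hlo a ha; have := hlo b hb
  have : b = a + 1 := by omega
  exact hadj a ha (this ▸ hb)

lemma shifted_plain (W : Finset ℕ) (x H : ℕ) (hlo : ∀ u ∈ W, x ≤ u)
    (hH : ∀ u ∈ W, u ≤ H) (hadj : ∀ u ∈ W, u + 1 ∉ W) :
    2 * W.card ≤ (H - x) + 2 := by
  rw [← shift_card W x hlo]
  apply master_plain _ (H - x) (shift_adj W x hlo hadj)
  intro u hu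
  simp only [Finset.mem_image] at hu
  obtain ⟨a, ha, rfl⟩ := hu
  have := hH a ha; omega

lemma shifted_cross (W : Finset ℕ) (x H c : ℕ) (hlo : ∀ u ∈ W, x ≤ u)
    (hH : ∀ u ∈ W, u ≤ H) (hadj : ∀ u ∈ W, u + 1 ∉ W)
    (hc : ∀ u ∈ W, u ≠ c ∧ u + 1 ≠ c ∧ u ≠ c + 1) (hxc : x ≤ c) (hcH : c ≤ H) :
    2 * W.card + 2 ≤ (H - x) + 2 := by
  rw [← shift_card W x hlo]
  apply master_cross _ (H - x) (c - x) (shift_adj W x hlo hadj)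
  · intro u hu
    simp only [Finset.mem_image] at hu
    obtain ⟨a, ha, rfl⟩ := hu
    have := hH a ha; omega
  · intro u hu
    simp only [Finset.mem_image] at hu
    obtain ⟨a, ha, rfl⟩ := hu
    have h1 := hc a ha
    have := hlo a ha
    refine ⟨by omega, by omega, by omega⟩
  · omega

end Stmt8aux

namespace Stmt8aux

def gfun (X : Finset ℕ) (c x : ℕ) : ℕ :=
  x - (X.filter (· < x)).card - (if c < x then 2 else 0)

def Good (X : Finset ℕ) (c : ℕ) : Prop :=
  (∀ u ∈ X, u + 1 ∉ X) ∧ ∀ u ∈ X, u ≠ c ∧ u + 1 ≠ c ∧ u ≠ c + 1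

lemma filter_le_eq (X : Finset ℕ) (x : ℕ) (hx : x ∈ X) :
    X.filter (· ≤ x) = insert x (X.filter (· < x)) := by
  ext u
  simp only [Finset.mem_filter, Finset.mem_insert]
  constructor
  · rintro ⟨hu, hle⟩
    rcases eq_or_lt_of_le hle with rfl | h
    · exact Or.inl rfl
    · exact Or.inr ⟨hu, h⟩
  · rintro (rfl | ⟨hu, h⟩)
    · exact ⟨hx, le_refl _⟩
    · exact ⟨hu, le_of_lt h⟩

lemma filter_ge_eq (X : Finset ℕ) (x : ℕ) (hx : x ∈ X) :
    X.filter (x ≤ ·) = insert x (X.filter (x < ·)) := by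
  ext u
  simp only [Finset.mem_filter, Finset.mem_insert]
  constructor
  · rintro ⟨hu, hle⟩
    rcases eq_or_lt_of_le hle with rfl | h
    · exact Or.inl rfl
    · exact Or.inr ⟨hu, h⟩
  · rintro (rfl | ⟨hu, h⟩)
    · exact ⟨hx, le_refl _⟩
    · exact ⟨hu, le_of_lt h⟩

/-- lower bound: `x ≥ 2·rank + cross`. -/
lemma L0 (X : Finset ℕ) (c : ℕ) (hG : Good X c) {x : ℕ} (hx : x ∈ X) :
    2 * (X.filter (· < x)).card + (if c < x then 2 else 0) ≤ x := by
  classical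
  set W := X.filter (· ≤ x) with hW
  have hWcard : W.card = (X.filter (· < x)).card + 1 := by
    rw [hW, filter_le_eq X x hx, Finset.card_insert_of_notMem (by simp)]
  have hadj : ∀ u ∈ W, u + 1 ∉ W := by
    intro u hu h
    exact hG.1 u (Finset.mem_filter.mp hu).1 (Finset.mem_filter.mp h).1
  have hH : ∀ u ∈ W, u ≤ x := fun u hu => (Finset.mem_filter.mp hu).2
  by_cases hcx : c < x
  · have := master_cross W x c hadj hH ?_ (le_of_lt hcx)
    · simp only [if_pos hcx]; omega
    · intro u hu; exact hG.2 u (Finset.mem_filter.mp hu).1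
  · have := master_plain W x hadj hH
    simp only [if_neg hcx]; omega

/-- strict monotonicity of the compression map on `X`. -/
lemma g_strictMono (X : Finset ℕ) (c : ℕ) (hG : Good X c) {x y : ℕ}
    (hx : x ∈ X) (hy : y ∈ X) (hxy : x < y) :
    gfun X c x < gfun X c y := by
  classical
  have hx0 := L0 X c hG hx
  have hy0 := L0 X c hG hy
  set rx := (X.filter (· < x)).card with hrx
  set ry := (X.filter (· < y)).card with hry
  set W := X.filter (fun u => x ≤ u ∧ u ≤ y) with hWdef
  have hyW : y ∈ W := Finset.mem_filter.mpr ⟨hy, le_of_lt hxy, le_refl _⟩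
  have hxW : x ∈ W := Finset.mem_filter.mpr ⟨hx, le_refl _, le_of_lt hxy⟩
  have hWerase : X.filter (fun u => x ≤ u ∧ u < y) = W.erase y := by
    ext u
    simp only [hWdef, Finset.mem_filter, Finset.mem_erase]
    constructor
    · rintro ⟨hu, h1, h2⟩; exact ⟨by omega, hu, h1, by omega⟩
    · rintro ⟨hne, hu, h1, h2⟩; exact ⟨hu, h1, by omega⟩
  have hry2 : ry = rx + (W.card - 1) := by
    have hsplit : X.filter (· < y) =
        (X.filter (· < x)) ∪ (X.filter (fun u => x ≤ u ∧ u < y)) := by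
      ext u
      simp only [Finset.mem_filter, Finset.mem_union]
      constructor
      · rintro ⟨hu, h⟩
        by_cases hux : u < x
        · exact Or.inl ⟨hu, hux⟩
        · exact Or.inr ⟨hu, by omega, h⟩
      · rintro (⟨hu, h⟩ | ⟨hu, h1, h2⟩) <;> exact ⟨hu, by omega⟩
    have hdisj : Disjoint (X.filter (· < x)) (X.filter (fun u => x ≤ u ∧ u < y)) := by
      simp only [Finset.disjoint_left, Finset.mem_filter]
      rintro u ⟨_, h⟩ ⟨_, h1, _⟩; omega
    rw [hry, hsplit, Finset.card_union_of_disjoint hdisj, hWerase,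
      Finset.card_erase_of_mem hyW]
  have hm2 : 2 ≤ W.card := by
    have : x ∈ W.erase y := Finset.mem_erase.mpr ⟨by omega, hxW⟩
    have h1 : 1 ≤ (W.erase y).card := Finset.card_pos.mpr ⟨x, this⟩
    have := Finset.card_erase_of_mem hyW
    omega
  have hlo : ∀ u ∈ W, x ≤ u := fun u hu => (Finset.mem_filter.mp hu).2.1
  have hH : ∀ u ∈ W, u ≤ y := fun u hu => (Finset.mem_filter.mp hu).2.2
  have hadj : ∀ u ∈ W, u + 1 ∉ W := by
    intro u hu h
    exact hG.1 u (Finset.mem_filter.mp hu).1 (Finset.mem_filter.mp h).1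
  unfold gfun
  rw [← hrx, ← hry]
  by_cases hcx : c < x
  · have hplain := shifted_plain W x y hlo hH hadj
    have hcy : c < y := lt_trans hcx hxy
    rw [if_pos hcx, if_pos hcy]
    rw [if_pos hcy] at hy0
    rw [if_pos hcx] at hx0
    omega
  · have hxc : x < c := by
      have := (hG.2 x hx).1
      omega
    by_cases hcy : c < y
    · have hcross := shifted_cross W x y c hlo hH hadj
        (fun u hu => hG.2 u (Finset.mem_filter.mp hu).1) (by omega) (by omega)
      rw [if_neg hcx, if_pos hcy]
      rw [if_pos hcy] at hy0
      rw [if_neg hcx] at hx0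
      omega
    · have hyc : y < c := by
        have := (hG.2 y hy).1
        omega
      have hplain := shifted_plain W x y hlo hH hadj
      rw [if_neg hcx, if_neg hcy]
      rw [if_neg hcy] at hy0
      rw [if_neg hcx] at hx0
      omega

/-- upper bound for the compressed values. -/
lemma L3 (X : Finset ℕ) (c M : ℕ) (hG : Good X c) (hM : ∀ u ∈ X, u ≤ M)
    (hcM : c ≤ M) {x : ℕ} (hx : x ∈ X) :
    gfun X c x + X.card + 1 ≤ M := by
  classical
  have hx0 := L0 X c hG hx
  have hxM : x ≤ M := hM x hx
  set rx := (X.filter (· < x)).card with hrx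
  set W := X.filter (x ≤ ·) with hWdef
  have hWcard : W.card = (X.filter (x < ·)).card + 1 := by
    rw [hWdef, filter_ge_eq X x hx, Finset.card_insert_of_notMem (by simp)]
  have htot : X.card = rx + W.card := by
    have := Finset.card_filter_add_card_filter_not (s := X) (p := (· < x))
    rw [hrx, hWdef]
    have hcong : X.filter (fun u => ¬ u < x) = X.filter (x ≤ ·) := by
      apply Finset.filter_congr
      intro u _
      simp [not_lt]
    rw [← hcong]
    omega
  have hlo : ∀ u ∈ W, x ≤ u := fun u hu => (Finset.mem_filter.mp hu).2
  have hH : ∀ u ∈ W, u ≤ M := fun u hu => hM u (Finset.mem_filter.mp hu).1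
  have hadj : ∀ u ∈ W, u + 1 ∉ W := by
    intro u hu h
    exact hG.1 u (Finset.mem_filter.mp hu).1 (Finset.mem_filter.mp h).1
  unfold gfun
  rw [← hrx]
  by_cases hcx : c < x
  · have hplain := shifted_plain W x M hlo hH hadj
    have key : x + 2 * ((X.filter (x < ·)).card + 1) ≤ M + 2 := by
      rw [← hWcard]
      omega
    rw [if_pos hcx]
    rw [if_pos hcx] at hx0
    rw [htot, hWcard]
    omega
  · have hcross := shifted_cross W x M c hlo hH hadj
      (fun u hu => hG.2 u (Finset.mem_filter.mp hu).1) (by omega) hcM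
    have key : x + 2 * ((X.filter (x < ·)).card + 1) + 2 ≤ M + 2 := by
      rw [← hWcard]
      omega
    rw [if_neg hcx]
    rw [if_neg hcx] at hx0
    rw [htot, hWcard]
    omega

end Stmt8aux

namespace Stmt8aux

def hfun (Z : Finset ℕ) (c z : ℕ) : ℕ :=
  z + (Z.filter (· < z)).card + (if c ≤ z + (Z.filter (· < z)).card then 2 else 0)

lemma g_lt_iff (X : Finset ℕ) (c : ℕ) (hG : Good X c) {x y : ℕ}
    (hx : x ∈ X) (hy : y ∈ X) :
    gfun X c y < gfun X c x ↔ y < x := by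
  constructor
  · intro h
    by_contra hc
    push_neg at hc
    rcases eq_or_lt_of_le hc with rfl | hlt
    · omega
    · exact absurd (g_strictMono X c hG hx hy hlt) (by omega)
  · exact g_strictMono X c hG hy hx

lemma rank_preserved (X : Finset ℕ) (c : ℕ) (hG : Good X c) {x : ℕ} (hx : x ∈ X) :
    ((X.image (gfun X c)).filter (· < gfun X c x)).card = (X.filter (· < x)).card := by
  classical
  have hset : (X.image (gfun X c)).filter (· < gfun X c x)
      = (X.filter (· < x)).image (gfun X c) := by
    ext z
    simp only [Finset.mem_filter, Finset.mem_image]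
    constructor
    · rintro ⟨⟨y, hy, rfl⟩, hlt⟩
      exact ⟨y, ⟨hy, (g_lt_iff X c hG hx hy).mp hlt⟩, rfl⟩
    · rintro ⟨y, ⟨hy, hlt⟩, rfl⟩
      exact ⟨⟨y, hy, rfl⟩, (g_lt_iff X c hG hx hy).mpr hlt⟩
  rw [hset]
  apply Finset.card_image_of_injOn
  intro u hu v hv huv
  have hu' := (Finset.mem_filter.mp hu).1
  have hv' := (Finset.mem_filter.mp hv).1
  by_contra hne
  rcases Nat.lt_or_ge u v with h | h
  · exact absurd (g_strictMono X c hG hu' hv' h) (by omega)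
  · rcases eq_or_lt_of_le h with rfl | h'
    · exact hne rfl
    · exact absurd (g_strictMono X c hG hv' hu' h') (by omega)

lemma h_left_inverse (X : Finset ℕ) (c : ℕ) (hG : Good X c) {x : ℕ} (hx : x ∈ X) :
    hfun (X.image (gfun X c)) c (gfun X c x) = x := by
  classical
  have hrank := rank_preserved X c hG hx
  have hx0 := L0 X c hG hx
  unfold hfun
  rw [hrank]
  unfold gfun
  by_cases hcx : c < x
  · have hxc2 : c + 2 ≤ x := by
      have := (hG.2 x hx).2.2
      omega
    rw [if_pos hcx] at hx0 ⊢
    rw [if_pos (by omega : c ≤ x - (X.filter (· < x)).card - 2 + (X.filter (· < x)).card)]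
    omega
  · have hxc : x < c := by
      have := (hG.2 x hx).1
      omega
    rw [if_neg hcx] at hx0 ⊢
    rw [if_neg (by omega : ¬ c ≤ x - (X.filter (· < x)).card - 0 + (X.filter (· < x)).card)]
    omega

lemma recover (X : Finset ℕ) (c : ℕ) (hG : Good X c) :
    (X.image (gfun X c)).image (hfun (X.image (gfun X c)) c) = X := by
  classical
  rw [Finset.image_image]
  have : ∀ x ∈ X, (hfun (X.image (gfun X c)) c ∘ gfun X c) x = id x := by
    intro x hx
    exact h_left_inverse X c hG hx
  rw [Finset.image_congr this, Finset.image_id]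

lemma image_g_injective (X X' : Finset ℕ) (c : ℕ) (hG : Good X c) (hG' : Good X' c)
    (h : X.image (gfun X c) = X'.image (gfun X' c)) : X = X' := by
  have h1 := recover X c hG
  have h2 := recover X' c hG'
  rw [← h1, ← h2, h]

end Stmt8aux

namespace Stmt8aux

def rho (n a x : ℕ) : ℕ := (x + n - a) % n

lemma rho_spec (n a x : ℕ) (ha1 : 1 ≤ a) (han : a ≤ n) (hx1 : 1 ≤ x) (hxn : x ≤ n) :
    rho n a x = if a ≤ x then x - a else x + n - a := by
  unfold rho
  by_cases h : a ≤ x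
  · rw [if_pos h]
    have : x + n - a = (x - a) + n := by omega
    rw [this, Nat.add_mod_right, Nat.mod_eq_of_lt (by omega)]
  · rw [if_neg h]
    exact Nat.mod_eq_of_lt (by omega)

lemma rho_self (n a : ℕ) (ha1 : 1 ≤ a) (han : a ≤ n) : rho n a a = 0 := by
  rw [rho_spec n a a ha1 han ha1 han, if_pos (le_refl a)]
  omega

lemma rho_inj (n a x y : ℕ) (ha1 : 1 ≤ a) (han : a ≤ n) (hx1 : 1 ≤ x) (hxn : x ≤ n)
    (hy1 : 1 ≤ y) (hyn : y ≤ n) (h : rho n a x = rho n a y) : x = y := by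
  rw [rho_spec n a x ha1 han hx1 hxn, rho_spec n a y ha1 han hy1 hyn] at h
  by_cases h1 : a ≤ x <;> by_cases h2 : a ≤ y <;>
    simp only [h1, h2, if_true, if_false, if_pos, if_neg] at h <;> omega

lemma rho_adj (n a x y : ℕ) (ha1 : 1 ≤ a) (han : a ≤ n) (hx1 : 1 ≤ x) (hxn : x ≤ n)
    (hy1 : 1 ≤ y) (hyn : y ≤ n) (h : rho n a y = rho n a x + 1) :
    y = x + 1 ∨ (x = n ∧ y = 1) := by
  rw [rho_spec n a x ha1 han hx1 hxn, rho_spec n a y ha1 han hy1 hyn] at h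
  by_cases h1 : a ≤ x <;> by_cases h2 : a ≤ y <;>
    simp only [h1, h2, if_true, if_false, if_pos, if_neg] at h <;> omega

/-- two members of a stable set are not cyclically adjacent. -/
lemma stable_not_adj {n : ℕ} {C : Finset ℕ} (hC : C ⊆ Finset.Icc 1 n)
    (hS : Stable n C) {x y : ℕ} (hx : x ∈ C) (hy : y ∈ C)
    (a : ℕ) (ha1 : 1 ≤ a) (han : a ≤ n) :
    rho n a y ≠ rho n a x + 1 := by
  intro h
  have hx' := Finset.mem_Icc.mp (hC hx)
  have hy' := Finset.mem_Icc.mp (hC hy)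
  rcases rho_adj n a x y ha1 han hx'.1 hx'.2 hy'.1 hy'.2 h with h' | ⟨rfl, rfl⟩
  · exact hS.1 x hx (h' ▸ hy)
  · exact hS.2 ⟨hy, hx⟩

/-- residues of elements other than the base point lie in `[2, n-2]`. -/
lemma residue_bounds {n : ℕ} {C : Finset ℕ} (hC : C ⊆ Finset.Icc 1 n)
    (hS : Stable n C) {a x : ℕ} (haC : a ∈ C) (hxC : x ∈ C) (hxa : x ≠ a) :
    2 ≤ rho n a x ∧ rho n a x ≤ n - 2 := by
  have ha' := Finset.mem_Icc.mp (hC haC)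
  have hx' := Finset.mem_Icc.mp (hC hxC)
  have hn1 : 1 ≤ n := le_trans ha'.1 ha'.2
  have hlt : rho n a x < n := Nat.mod_lt _ (by omega)
  have h0 : rho n a x ≠ 0 := by
    intro h
    exact hxa (rho_inj n a x a ha'.1 ha'.2 hx'.1 hx'.2 ha'.1 ha'.2
      (by rw [h, rho_self n a ha'.1 ha'.2]))
  have h1 : rho n a x ≠ 1 := by
    intro h
    apply stable_not_adj hC hS haC hxC a ha'.1 ha'.2
    rw [h, rho_self n a ha'.1 ha'.2]
  have h2 : rho n a x ≠ n - 1 := by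
    intro h
    rw [rho_spec n a x ha'.1 ha'.2 hx'.1 hx'.2] at h
    by_cases hax : a ≤ x
    · rw [if_pos hax] at h
      have hx_n : x = n := by omega
      have ha_1 : a = 1 := by omega
      exact hS.2 ⟨ha_1 ▸ haC, hx_n ▸ hxC⟩
    · rw [if_neg hax] at h
      have : a = x + 1 := by omega
      exact hS.1 x hxC (this ▸ haC)
  omega

end Stmt8aux

namespace Stmt8aux

lemma g_injOn (X : Finset ℕ) (c : ℕ) (hG : Good X c) :
    ∀ u ∈ X, ∀ v ∈ X, gfun X c u = gfun X c v → u = v := by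
  intro u hu v hv huv
  by_contra hne
  rcases Nat.lt_or_ge u v with h | h
  · exact absurd (g_strictMono X c hG hu hv h) (by omega)
  · rcases eq_or_lt_of_le h with rfl | h'
    · exact hne rfl
    · exact absurd (g_strictMono X c hG hv hu h') (by omega)

lemma image_cancel {f : ℕ → ℕ} {D D' : Finset ℕ}
    (hinj : ∀ x ∈ D, ∀ y ∈ D', f x = f y → x = y)
    (hinj' : ∀ x ∈ D', ∀ y ∈ D, f x = f y → x = y)
    (h : D.image f = D'.image f) : D = D' := by
  classical
  apply Finset.Subset.antisymm
  · intro x hx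
    have : f x ∈ D'.image f := h ▸ Finset.mem_image_of_mem f hx
    obtain ⟨y, hy, hxy⟩ := Finset.mem_image.mp this
    exact (hinj x hx y hy hxy.symm) ▸ hy
  · intro x hx
    have : f x ∈ D.image f := h ▸ Finset.mem_image_of_mem f hx
    obtain ⟨y, hy, hxy⟩ := Finset.mem_image.mp this
    exact (hinj' x hx y hy hxy.symm) ▸ hy

def Xof (n a b : ℕ) (C : Finset ℕ) : Finset ℕ :=
  ((C.erase a).erase b).image (fun x => rho n a x - 2)

noncomputable def Zof (n a b : ℕ) (C : Finset ℕ) : Finset ℕ :=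
  (Xof n a b C).image (gfun (Xof n a b C) (rho n a b - 2))

lemma stableSets_mem {n k : ℕ} {C : Finset ℕ} (hC : C ∈ stableSets n k) :
    C ⊆ Finset.Icc 1 n ∧ C.card = k ∧ Stable n C := by
  unfold stableSets at hC
  rw [Finset.mem_filter, Finset.mem_powersetCard] at hC
  exact ⟨hC.1.1, hC.1.2, hC.2⟩

lemma Xof_props {n k a b : ℕ} (hab : a ≠ b) {C : Finset ℕ}
    (hC : C ∈ stableSets n k) (haC : a ∈ C) (hbC : b ∈ C) :
    Good (Xof n a b C) (rho n a b - 2) ∧ (Xof n a b C).card = k - 2 ∧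
      (∀ u ∈ Xof n a b C, u ≤ n - 4) := by
  classical
  obtain ⟨hsub, hcard, hS⟩ := stableSets_mem hC
  have ha' := Finset.mem_Icc.mp (hsub haC)
  have hb' := Finset.mem_Icc.mp (hsub hbC)
  have hbres := residue_bounds hsub hS haC hbC (Ne.symm hab)
  -- facts about elements of the erased set
  have hmem : ∀ x ∈ (C.erase a).erase b, x ∈ C ∧ x ≠ a ∧ x ≠ b := by
    intro x hx
    have h1 := Finset.mem_erase.mp hx
    have h2 := Finset.mem_erase.mp h1.2
    exact ⟨h2.2, h2.1, h1.1⟩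
  have hres : ∀ x ∈ (C.erase a).erase b, 2 ≤ rho n a x ∧ rho n a x ≤ n - 2 := by
    intro x hx
    obtain ⟨hxC, hxa, _⟩ := hmem x hx
    exact residue_bounds hsub hS haC hxC hxa
  have hGood : Good (Xof n a b C) (rho n a b - 2) := by
    constructor
    · intro u hu hu1
      obtain ⟨x, hx, rfl⟩ := Finset.mem_image.mp hu
      obtain ⟨y, hy, hyx⟩ := Finset.mem_image.mp hu1
      have hrx := hres x hx
      have hry := hres y hy
      have : rho n a y = rho n a x + 1 := by omega
      exact stable_not_adj hsub hS (hmem x hx).1 (hmem y hy).1 a ha'.1 ha'.2 this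
    · intro u hu
      obtain ⟨x, hx, rfl⟩ := Finset.mem_image.mp hu
      have hrx := hres x hx
      obtain ⟨hxC, hxa, hxb⟩ := hmem x hx
      refine ⟨?_, ?_, ?_⟩
      · intro h
        have : rho n a x = rho n a b := by omega
        exact hxb (rho_inj n a x b ha'.1 ha'.2
          (Finset.mem_Icc.mp (hsub hxC)).1 (Finset.mem_Icc.mp (hsub hxC)).2
          hb'.1 hb'.2 this)
      · intro h
        have : rho n a b = rho n a x + 1 := by omega
        exact stable_not_adj hsub hS hxC hbC a ha'.1 ha'.2 this
      · intro h
        have : rho n a x = rho n a b + 1 := by omega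
        exact stable_not_adj hsub hS hbC hxC a ha'.1 ha'.2 this
  refine ⟨hGood, ?_, ?_⟩
  · unfold Xof
    have hinj : Set.InjOn (fun x => rho n a x - 2) ((C.erase a).erase b) := by
      intro x hx' y hy' hxy
      have hx := Finset.mem_coe.mp hx'
      have hy := Finset.mem_coe.mp hy'
      have hrx := hres x hx
      have hry := hres y hy
      simp only at hxy
      have : rho n a x = rho n a y := by omega
      exact rho_inj n a x y ha'.1 ha'.2
        (Finset.mem_Icc.mp (hsub (hmem x hx).1)).1 (Finset.mem_Icc.mp (hsub (hmem x hx).1)).2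
        (Finset.mem_Icc.mp (hsub (hmem y hy).1)).1 (Finset.mem_Icc.mp (hsub (hmem y hy).1)).2 this
    rw [Finset.card_image_of_injOn hinj, Finset.card_erase_of_mem
      (Finset.mem_erase.mpr ⟨Ne.symm hab, hbC⟩), Finset.card_erase_of_mem haC, hcard]
    omega
  · intro u hu
    obtain ⟨x, hx, rfl⟩ := Finset.mem_image.mp hu
    have hrx := hres x hx
    omega

end Stmt8aux

namespace Stmt8aux

lemma count_pair (n k a b : ℕ) (hk : 2 ≤ k) (hn : 2 * k ≤ n)
    (ha : a ∈ Finset.Icc 1 n) (hb : b ∈ Finset.Icc 1 n) (hab : a ≠ b) :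
    ((stableSets n k).filter (fun C => a ∈ C ∧ b ∈ C)).card
      ≤ (n - k - 2).choose (k - 2) := by
  classical
  have htarget : ((Finset.range (n - k - 2)).powersetCard (k - 2)).card
      = (n - k - 2).choose (k - 2) := by
    rw [Finset.card_powersetCard, Finset.card_range]
  rw [← htarget]
  apply Finset.card_le_card_of_injOn (fun C => Zof n a b C)
  · -- maps into powersetCard
    intro C hC'
    rw [Finset.mem_coe, Finset.mem_filter] at hC'
    obtain ⟨hC, haC, hbC⟩ := hC'
    obtain ⟨hGood, hXcard, hXbound⟩ := Xof_props hab hC haC hbC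
    obtain ⟨hsub, hcard, hS⟩ := stableSets_mem hC
    have hbres := residue_bounds hsub hS haC hbC (Ne.symm hab)
    rw [Finset.mem_coe, Finset.mem_powersetCard]
    constructor
    · intro z hz
      obtain ⟨x, hx, rfl⟩ := Finset.mem_image.mp hz
      have hL3 := L3 (Xof n a b C) (rho n a b - 2) (n - 4) hGood hXbound (by omega) hx
      rw [Finset.mem_range]
      omega
    · unfold Zof
      rw [Finset.card_image_of_injOn, hXcard]
      intro u hu v hv huv
      exact g_injOn _ _ hGood u (Finset.mem_coe.mp hu) v (Finset.mem_coe.mp hv) huv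
  · -- injectivity
    intro C hC' C' hC'' hZ
    simp only [Finset.mem_coe, Finset.mem_filter] at hC' hC''
    obtain ⟨hC, haC, hbC⟩ := hC'
    obtain ⟨hD, haD, hbD⟩ := hC''
    obtain ⟨hGood, _, _⟩ := Xof_props hab hC haC hbC
    obtain ⟨hGood', _, _⟩ := Xof_props hab hD haD hbD
    obtain ⟨hsub, hcard, hS⟩ := stableSets_mem hC
    obtain ⟨hsub', hcard', hS'⟩ := stableSets_mem hD
    have ha' := Finset.mem_Icc.mp ha
    have hX : Xof n a b C = Xof n a b C' :=
      image_g_injective _ _ _ hGood hGood' hZ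
    -- recover the erased sets
    have hmem : ∀ (D₀ : Finset ℕ), D₀ ⊆ Finset.Icc 1 n → (∀ x ∈ D₀, x ∈ Finset.Icc 1 n) :=
      fun D₀ h x hx => h hx
    have herase : (C.erase a).erase b = (C'.erase a).erase b := by
      apply image_cancel (f := fun x => rho n a x - 2) ?_ ?_ hX
      · intro x hx y hy hxy
        have h1 := Finset.mem_erase.mp hx
        have h2 := Finset.mem_erase.mp h1.2
        have h1' := Finset.mem_erase.mp hy
        have h2' := Finset.mem_erase.mp h1'.2
        have hrx := residue_bounds hsub hS haC h2.2 h2.1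
        have hry := residue_bounds hsub' hS' haD h2'.2 h2'.1
        have : rho n a x = rho n a y := by omega
        exact rho_inj n a x y ha'.1 ha'.2
          (Finset.mem_Icc.mp (hsub h2.2)).1 (Finset.mem_Icc.mp (hsub h2.2)).2
          (Finset.mem_Icc.mp (hsub' h2'.2)).1 (Finset.mem_Icc.mp (hsub' h2'.2)).2 this
      · intro x hx y hy hxy
        have h1 := Finset.mem_erase.mp hx
        have h2 := Finset.mem_erase.mp h1.2
        have h1' := Finset.mem_erase.mp hy
        have h2' := Finset.mem_erase.mp h1'.2
        have hrx := residue_bounds hsub' hS' haD h2.2 h2.1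
        have hry := residue_bounds hsub hS haC h2'.2 h2'.1
        have : rho n a x = rho n a y := by omega
        exact rho_inj n a x y ha'.1 ha'.2
          (Finset.mem_Icc.mp (hsub' h2.2)).1 (Finset.mem_Icc.mp (hsub' h2.2)).2
          (Finset.mem_Icc.mp (hsub h2'.2)).1 (Finset.mem_Icc.mp (hsub h2'.2)).2 this
    have hC1 : C = insert a (insert b ((C.erase a).erase b)) := by
      rw [Finset.insert_erase (Finset.mem_erase.mpr ⟨Ne.symm hab, hbC⟩),
        Finset.insert_erase haC]
    have hC2 : C' = insert a (insert b ((C'.erase a).erase b)) := by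
      rw [Finset.insert_erase (Finset.mem_erase.mpr ⟨Ne.symm hab, hbD⟩),
        Finset.insert_erase haD]
    rw [hC1, hC2, herase]

end Stmt8aux

open Stmt8aux

theorem stmt_8 (n k : ℕ) (hk : 2 ≤ k) (hn : 2 * k ≤ n) (F : Finset (Finset ℕ))
    (hF : F ⊆ stableSets n k) (A B : Finset ℕ) (hA : A ∈ F) (hB : B ∈ F)
    (hAB : Disjoint A B) :
    ((F.filter (fun C => (C ∩ A).Nonempty ∧ (C ∩ B).Nonempty)).card
        ≤ k ^ 2 * Nat.choose (n - k - 2) (k - 2)) ∧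
    ((F.card : ℝ) - k ^ 2 * Nat.choose (n - k - 2) (k - 2)
        ≤ ((F.filter (fun C => Disjoint C A)).card : ℝ)
          + ((F.filter (fun C => Disjoint C B)).card : ℝ)) := by
  classical
  obtain ⟨hAsub, hAcard, _⟩ := stableSets_mem (hF hA)
  obtain ⟨hBsub, hBcard, _⟩ := stableSets_mem (hF hB)
  have key : (F.filter (fun C => (C ∩ A).Nonempty ∧ (C ∩ B).Nonempty)).card
      ≤ k ^ 2 * Nat.choose (n - k - 2) (k - 2) := by
    have hsub : F.filter (fun C => (C ∩ A).Nonempty ∧ (C ∩ B).Nonempty)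
        ⊆ (A ×ˢ B).biUnion
          (fun p => (stableSets n k).filter (fun C => p.1 ∈ C ∧ p.2 ∈ C)) := by
      intro C hC
      rw [Finset.mem_filter] at hC
      obtain ⟨hCF, ⟨x, hx⟩, ⟨y, hy⟩⟩ := hC
      rw [Finset.mem_inter] at hx hy
      rw [Finset.mem_biUnion]
      exact ⟨(x, y), Finset.mem_product.mpr ⟨hx.2, hy.2⟩,
        Finset.mem_filter.mpr ⟨hF hCF, hx.1, hy.1⟩⟩
    calc (F.filter (fun C => (C ∩ A).Nonempty ∧ (C ∩ B).Nonempty)).card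
        ≤ ((A ×ˢ B).biUnion
            (fun p => (stableSets n k).filter (fun C => p.1 ∈ C ∧ p.2 ∈ C))).card :=
          Finset.card_le_card hsub
      _ ≤ ∑ p ∈ A ×ˢ B,
            ((stableSets n k).filter (fun C => p.1 ∈ C ∧ p.2 ∈ C)).card :=
          Finset.card_biUnion_le
      _ ≤ ∑ _p ∈ A ×ˢ B, Nat.choose (n - k - 2) (k - 2) := by
          apply Finset.sum_le_sum
          intro p hp
          rw [Finset.mem_product] at hp
          have hane : p.1 ≠ p.2 := by
            intro h
            exact (Finset.disjoint_left.mp hAB hp.1) (h ▸ hp.2)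
          exact count_pair n k p.1 p.2 hk hn (hAsub hp.1) (hBsub hp.2) hane
      _ = k ^ 2 * Nat.choose (n - k - 2) (k - 2) := by
          rw [Finset.sum_const, Finset.card_product, hAcard, hBcard, smul_eq_mul, sq]
  refine ⟨key, ?_⟩
  have hcover : F.card ≤ (F.filter (fun C => Disjoint C A)).card
      + (F.filter (fun C => Disjoint C B)).card
      + (F.filter (fun C => (C ∩ A).Nonempty ∧ (C ∩ B).Nonempty)).card := by
    have hsub : F ⊆ (F.filter (fun C => Disjoint C A)
        ∪ F.filter (fun C => Disjoint C B))
        ∪ F.filter (fun C => (C ∩ A).Nonempty ∧ (C ∩ B).Nonempty) := by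
      intro C hC
      rw [Finset.mem_union, Finset.mem_union]
      by_cases h1 : Disjoint C A
      · exact Or.inl (Or.inl (Finset.mem_filter.mpr ⟨hC, h1⟩))
      by_cases h2 : Disjoint C B
      · exact Or.inl (Or.inr (Finset.mem_filter.mpr ⟨hC, h2⟩))
      refine Or.inr (Finset.mem_filter.mpr ⟨hC, ?_, ?_⟩)
      · exact Finset.not_disjoint_iff_nonempty_inter.mp h1
      · exact Finset.not_disjoint_iff_nonempty_inter.mp h2
    calc F.card ≤ _ := Finset.card_le_card hsub
      _ ≤ _ := Finset.card_union_le _ _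
      _ ≤ _ := Nat.add_le_add_right (Finset.card_union_le _ _) _
  have h1 : ((F.filter (fun C => (C ∩ A).Nonempty ∧ (C ∩ B).Nonempty)).card : ℝ)
      ≤ (k : ℝ) ^ 2 * (Nat.choose (n - k - 2) (k - 2) : ℝ) := by
    exact_mod_cast key
  have h2 : (F.card : ℝ) ≤ ((F.filter (fun C => Disjoint C A)).card : ℝ)
      + ((F.filter (fun C => Disjoint C B)).card : ℝ)
      + ((F.filter (fun C => (C ∩ A).Nonempty ∧ (C ∩ B).Nonempty)).card : ℝ) := by
    exact_mod_cast hcover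
  linarith
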